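/- Let A ∈ SL(2,ℤ) be a matrix with |trace(A)| > 2, and let Γ = ℤ² ⋊_A ℤ be the semidirect product of ℤ² by ℤ in which the generator 1 ∈ ℤ acts on ℤ² by the automorphism v ↦ Av (so k ∈ ℤ acts by v ↦ A^k v). Then Γ has Grossman's Property A: every class-preserving automorphism of Γ is inner. -/
import Mathlib

/-- A group `G` has Grossman's Property A if every class-preserving automorphism
(i.e. one sending each element to a conjugate of itself) is inner. -/
def HasPropertyA (G : Type*) [Group G] : Prop :=
  ∀ φ : G ≃* G, (∀ g : G, IsConj g (φ g)) → ∃ h : G, ∀ g : G, φ g = h * g * h⁻¹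

/-- The action of `ℤ` on `ℤ²` in which `k ∈ ℤ` acts by `v ↦ A^k v`,
for `A ∈ SL(2,ℤ)`. -/
def matrixAction (A : Matrix.SpecialLinearGroup (Fin 2) ℤ) :
    Multiplicative ℤ →* MulAut (Multiplicative (Fin 2 → ℤ)) :=
  zpowersHom (MulAut (Multiplicative (Fin 2 → ℤ)))
    (AddEquiv.toMultiplicative (Matrix.SpecialLinearGroup.toLin' A).toAddEquiv)

open SemidirectProduct Multiplicative

namespace AnosovAux

variable (A : Matrix.SpecialLinearGroup (Fin 2) ℤ)

/-- The generator of the action. -/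
noncomputable def beta : MulAut (Multiplicative (Fin 2 → ℤ)) :=
  AddEquiv.toMultiplicative (Matrix.SpecialLinearGroup.toLin' A).toAddEquiv

lemma matrixAction_eq (r : Multiplicative ℤ) :
    matrixAction A r = beta A ^ (toAdd r) := by
  simp [matrixAction, beta, zpowersHom_apply]

lemma beta_apply (v : Fin 2 → ℤ) :
    beta A (ofAdd v) = ofAdd ((A : Matrix (Fin 2) (Fin 2) ℤ).mulVec v) := by
  show ofAdd ((Matrix.SpecialLinearGroup.toLin' A) v) = _
  rw [Matrix.SpecialLinearGroup.toLin'_apply, Matrix.toLin'_apply]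

lemma A10_ne_zero (hA : 2 < |Matrix.trace (A : Matrix (Fin 2) (Fin 2) ℤ)|) :
    (A : Matrix (Fin 2) (Fin 2) ℤ) 1 0 ≠ 0 := by
  intro h
  have hdet : (A : Matrix (Fin 2) (Fin 2) ℤ).det = 1 := A.2
  rw [Matrix.det_fin_two, h, mul_zero, sub_zero] at hdet
  rw [Matrix.trace_fin_two] at hA
  rcases Int.eq_one_or_neg_one_of_mul_eq_one' hdet with ⟨h1, h2⟩ | ⟨h1, h2⟩ <;>
    rw [h1, h2] at hA <;> norm_num at hA

/-- conjugation of an `inl` element. -/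
lemma conj_inl (c : Multiplicative (Fin 2 → ℤ) ⋊[matrixAction A] Multiplicative ℤ)
    (v : Multiplicative (Fin 2 → ℤ)) :
    c * inl v * c⁻¹ = inl ((matrixAction A c.right) v) := by
  have h1 : c * inl v * c⁻¹
      = inl c.left * (inr c.right * inl v * (inr c.right)⁻¹) * (inl c.left)⁻¹ := by
    conv_lhs => rw [← inl_left_mul_inr_right c]
    group
  rw [h1, ← map_inv, ← inl_aut, ← map_inv, ← map_mul, ← map_mul]
  congr 1
  rw [mul_comm c.left, mul_inv_cancel_right]

end AnosovAux

open AnosovAux in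
/-- If `A ∈ SL(2,ℤ)` is Anosov (`|trace A| > 2`), then the semidirect product
`Γ = ℤ² ⋊_A ℤ` has Grossman's Property A. -/
theorem anosovBundle_propertyA (A : Matrix.SpecialLinearGroup (Fin 2) ℤ)
    (hA : 2 < |Matrix.trace (A : Matrix (Fin 2) (Fin 2) ℤ)|) :
    HasPropertyA (Multiplicative (Fin 2 → ℤ) ⋊[matrixAction A] Multiplicative ℤ) := by
  classical
  intro φ hφ
  set Γ := Multiplicative (Fin 2 → ℤ) ⋊[matrixAction A] Multiplicative ℤ with hΓ
  set t : Γ := inr (ofAdd 1) with ht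
  obtain ⟨g, hg⟩ := isConj_iff.1 (hφ t)
  set ψ : Γ ≃* Γ := φ.trans (MulAut.conj g⁻¹ : Multiplicative (Fin 2 → ℤ) ⋊[matrixAction A] Multiplicative ℤ ≃* Multiplicative (Fin 2 → ℤ) ⋊[matrixAction A] Multiplicative ℤ) with hψdef
  have hψ : ∀ x : Γ, ψ x = g⁻¹ * φ x * g := by
    intro x
    simp [hψdef, MulAut.conj_apply]
  have hψconj : ∀ x : Γ, IsConj x (ψ x) := by
    intro x
    exact (hφ x).trans (isConj_iff.2 ⟨g⁻¹, by rw [hψ]; group⟩)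
  have hψt : ψ t = t := by
    rw [hψ, ← hg]; group
  have hψright : ∀ x : Γ, (ψ x).right = x.right := by
    intro x
    obtain ⟨c, hc⟩ := isConj_iff.1 (hψconj x)
    rw [← hc, mul_right, mul_right, inv_right]
    exact mul_inv_cancel_comm c.right x.right
  have hψinr : ∀ n : Multiplicative ℤ, ψ (inr n : Γ) = inr n := by
    intro n
    have h1 : (inr n : Γ) = t ^ (toAdd n) := by
      rw [ht, ← map_zpow]
      congr 1
      apply toAdd.injective
      simp [toAdd_zpow]
    rw [h1, map_zpow, hψt]
  -- the restriction to the ℤ² part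
  set σ : Multiplicative (Fin 2 → ℤ) →* Multiplicative (Fin 2 → ℤ) :=
    { toFun := fun v => (ψ (inl v : Γ)).left
      map_one' := by simp
      map_mul' := by
        intro v w
        show (ψ (inl (v * w) : Γ)).left = _
        rw [map_mul inl v w, map_mul ψ, mul_left, hψright, right_inl, map_one,
          MulAut.one_apply] } with hσdef
  have hinl : ∀ v, ψ (inl v : Γ) = inl (σ v) := by
    intro v
    ext
    · rfl
    · rw [hψright, right_inl, right_inl]
  -- each basic vector is sent to a power of the action applied to it
  have hm : ∀ v : Multiplicative (Fin 2 → ℤ), ∃ m : ℤ, σ v = (beta A ^ m) v := by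
    intro v
    obtain ⟨c, hc⟩ := isConj_iff.1 (hψconj (inl v : Γ))
    refine ⟨toAdd c.right, ?_⟩
    rw [conj_inl, hinl] at hc
    have h2 := inl_injective hc
    rw [← h2, matrixAction_eq]
  -- σ commutes with the action
  have hcomm : ∀ v, σ (beta A v) = beta A (σ v) := by
    intro v
    have h1 : (inl (beta A v) : Γ) = t * inl v * t⁻¹ := by
      rw [show beta A v = (matrixAction A (ofAdd 1)) v by
        rw [matrixAction_eq]; norm_num]
      rw [inl_aut, ht, map_inv]
    have h2 := congrArg ψ h1
    rw [hinl, map_mul, map_mul, hψt, map_inv, hψt, hinl, ← map_inv, ← inl_aut] at h2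
    have h3 := inl_injective h2
    rw [h3, matrixAction_eq]
    norm_num
  -- the basis vector
  set e1 : Fin 2 → ℤ := ![1, 0] with he1
  obtain ⟨a, ha⟩ := hm (ofAdd e1)
  set N : ℤ := (A : Matrix (Fin 2) (Fin 2) ℤ) 1 0 with hN
  have hNne : N ≠ 0 := A10_ne_zero A hA
  -- main: σ = beta ^ a
  have key : ∀ v : Multiplicative (Fin 2 → ℤ), σ v = (beta A ^ a) v := by
    intro v
    set w : Fin 2 → ℤ := toAdd v with hw
    set p : ℤ := N * w 0 - (A : Matrix (Fin 2) (Fin 2) ℤ) 0 0 * w 1 with hp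
    set q : ℤ := w 1 with hq
    have hdecomp : v ^ N = (ofAdd e1) ^ p * (beta A (ofAdd e1)) ^ q := by
      apply toAdd.injective
      rw [toAdd_zpow, toAdd_mul, toAdd_zpow, toAdd_zpow, beta_apply]
      show N • w = p • e1 + q • (A : Matrix (Fin 2) (Fin 2) ℤ).mulVec e1
      funext i
      fin_cases i <;>
        simp [he1, Matrix.mulVec, dotProduct, Fin.sum_univ_two, hp, hq] <;> ring
    have hpow : σ v ^ N = ((beta A ^ a) v) ^ N := by
      calc σ v ^ N = σ (v ^ N) := (map_zpow σ v N).symm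
        _ = σ (ofAdd e1) ^ p * σ (beta A (ofAdd e1)) ^ q := by
            rw [hdecomp, map_mul, map_zpow, map_zpow]
        _ = ((beta A ^ a) (ofAdd e1)) ^ p * ((beta A ^ a) (beta A (ofAdd e1))) ^ q := by
            rw [ha, hcomm, ha]
            congr 2
            rw [← MulAut.mul_apply, ← MulAut.mul_apply, ← zpow_one_add, ← zpow_add_one,
              add_comm]
        _ = (beta A ^ a) ((ofAdd e1) ^ p * (beta A (ofAdd e1)) ^ q) := by
            rw [map_mul, map_zpow, map_zpow]
        _ = (beta A ^ a) (v ^ N) := by rw [hdecomp]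
        _ = ((beta A ^ a) v) ^ N := map_zpow _ v N
    have h4 : N • toAdd (σ v) = N • toAdd ((beta A ^ a) v) := by
      rw [← toAdd_zpow, ← toAdd_zpow, hpow]
    exact toAdd.injective (smul_right_injective (Fin 2 → ℤ) hNne h4)
  -- conclude
  refine ⟨g * inr (ofAdd a), ?_⟩
  intro x
  have hx : ψ x = inr (ofAdd a) * x * (inr (ofAdd a) : Γ)⁻¹ := by
    conv_lhs => rw [← inl_left_mul_inr_right x]
    rw [map_mul, hinl, hψinr, key]
    have h5 : (beta A ^ a) x.left = (matrixAction A (ofAdd a)) x.left := by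
      rw [matrixAction_eq, toAdd_ofAdd]
    have h7 : (inr (ofAdd a) : Γ) * x * (inr (ofAdd a) : Γ)⁻¹
        = inl ((matrixAction A (ofAdd a)) x.left) * inr x.right := by
      ext
      · simp [mul_left, inv_left, mul_right, left_inr, right_inr, left_inl, right_inl]
      · simp [mul_right, inv_right, right_inl, right_inr]
    rw [h5, ← h7]
  rw [hψ] at hx
  have : φ x = g * (inr (ofAdd a) * x * (inr (ofAdd a) : Γ)⁻¹) * g⁻¹ := by
    rw [← hx]; group
  rw [this]
  group
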